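/- Let q ≥ 2 be an integer, d | q a proper divisor, χ* a Dirichlet character mod d with at least one prime p | q, p ∤ d, and F(s) = ∏_{p|q}(1 - χ*(p)p^{-s}). For every real t and every real h > 0, the number N(t,h) of zeros iη of F (counted with multiplicity) with t ≤ η ≤ t + h satisfies N(t,h) ≤ C · h · (ω(q)/h + log q + h·r/(h² + t²)) for an absolute constant C, where ω(q) is the number of distinct prime factors of q and r is the number of primes p | q with χ*(p) = 1. -/

import Mathlib

open scoped Classical

-- abstract multiplicity comparison
lemma aux_mult_le {g G : ℂ → ℂ} {ρ : ℂ} {M E : ℕ}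
    (hg : ContinuousAt g ρ) (hG : ContinuousAt G ρ) (hGρ : G ρ ≠ 0)
    (heq : ∀ z, (z - ρ) ^ M * g z = (z - ρ) ^ E * G z) : M ≤ E := by
  by_contra hlt
  push_neg at hlt
  have hME : E ≤ M := hlt.le
  have key : ∀ z, z ≠ ρ → G z = (z - ρ) ^ (M - E) * g z := by
    intro z hz
    have h0 : (z - ρ) ≠ 0 := sub_ne_zero.mpr hz
    have h1 := heq z
    rw [← Nat.sub_add_cancel hME, pow_add] at h1
    have h2 : ((z - ρ) ^ (M - E) * g z) * (z - ρ) ^ E = G z * (z - ρ) ^ E := by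
      ring_nf
      ring_nf at h1
      linear_combination h1
    exact (mul_right_cancel₀ (pow_ne_zero E h0) h2).symm
  have t1 : Filter.Tendsto G (nhdsWithin ρ {ρ}ᶜ) (nhds (G ρ)) :=
    hG.tendsto.mono_left nhdsWithin_le_nhds
  have t2 : Filter.Tendsto (fun z => (z - ρ) ^ (M - E) * g z) (nhdsWithin ρ {ρ}ᶜ) (nhds 0) := by
    have hc : Filter.Tendsto (fun z => (z - ρ) ^ (M - E) * g z) (nhds ρ)
        (nhds ((ρ - ρ) ^ (M - E) * g ρ)) :=
      (((continuous_id.sub continuous_const).pow _).continuousAt).mul hg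
    have h0 : ((ρ - ρ) : ℂ) ^ (M - E) * g ρ = 0 := by
      rw [sub_self, zero_pow (Nat.sub_ne_zero_of_lt hlt), zero_mul]
    rw [h0] at hc
    exact hc.mono_left nhdsWithin_le_nhds
  have t1' : Filter.Tendsto G (nhdsWithin ρ {ρ}ᶜ) (nhds 0) := by
    refine t2.congr' ?_
    filter_upwards [self_mem_nhdsWithin] with z hz
    exact (key z hz).symm
  exact hGρ (tendsto_nhds_unique t1 t1')


lemma aux_count (c : ℂ) (p : ℕ) (hp : 2 ≤ p) (t h : ℝ) (hh : 0 < h) (Z : Finset ℂ)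
    (hZ : ∀ ρ ∈ Z, ∃ η : ℝ, ρ = η * Complex.I ∧ t ≤ η ∧ η ≤ t + h) :
    (((Z.filter fun ρ => (1 : ℂ) - c * (p : ℂ) ^ (-ρ) = 0).card : ℝ)) ≤
      2 + h * Real.log p := by
  set L : ℝ := Real.log p with hLdef
  have hL : 0 < L := Real.log_pos (by exact_mod_cast hp.trans_lt' one_lt_two)
  have hpi : 0 < 2 * Real.pi := by positivity
  set ι : ℂ → ℤ := fun ρ => ⌈ρ.im * L / (2 * Real.pi)⌉ with hι
  set A : ℝ := t * L / (2 * Real.pi) with hA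
  set B : ℝ := (t + h) * L / (2 * Real.pi) with hB
  have him : ∀ ρ ∈ Z, t ≤ ρ.im ∧ ρ.im ≤ t + h := by
    intro ρ hρ
    obtain ⟨η, rfl, h1, h2⟩ := hZ ρ hρ
    simpa using ⟨h1, h2⟩
  have hpc : (p : ℂ) ≠ 0 := Nat.cast_ne_zero.mpr (by omega)
  have hcpow : ∀ z : ℂ, (p : ℂ) ^ (-z) = Complex.exp ((L : ℂ) * (-z)) := by
    intro z
    rw [Complex.cpow_def_of_ne_zero hpc, hLdef, Complex.natCast_log]
  have key : (Z.filter fun ρ => (1 : ℂ) - c * (p : ℂ) ^ (-ρ) = 0).card ≤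
      (Finset.Icc ⌈A⌉ ⌈B⌉).card := by
    apply Finset.card_le_card_of_injOn ι
    · intro ρ hρ
      rw [Finset.mem_coe, Finset.mem_filter] at hρ
      obtain ⟨h1, h2⟩ := him ρ hρ.1
      rw [Finset.mem_coe, Finset.mem_Icc]
      constructor
      · exact Int.ceil_le_ceil (by rw [hA]; gcongr)
      · exact Int.ceil_le_ceil (by rw [hB]; gcongr)
    · intro ρ hρ ρ' hρ' hee
      rw [Finset.mem_coe, Finset.mem_filter] at hρ hρ'
      obtain ⟨η, rfl, _, _⟩ := hZ ρ hρ.1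
      obtain ⟨η', rfl, _, _⟩ := hZ ρ' hρ'.1
      have e1 : c * (p : ℂ) ^ (-((η : ℂ) * Complex.I)) = 1 := by
        have := hρ.2; linear_combination -this
      have e2 : c * (p : ℂ) ^ (-((η' : ℂ) * Complex.I)) = 1 := by
        have := hρ'.2; linear_combination -this
      have hc0 : c ≠ 0 := by
        intro hc; rw [hc, zero_mul] at e1; exact one_ne_zero e1.symm
      have e3 : Complex.exp ((L : ℂ) * (-((η : ℂ) * Complex.I))) =
          Complex.exp ((L : ℂ) * (-((η' : ℂ) * Complex.I))) := by
        rw [← hcpow, ← hcpow]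
        exact mul_left_cancel₀ hc0 (e1.trans e2.symm)
      obtain ⟨n, hn⟩ := Complex.exp_eq_exp_iff_exists_int.mp e3
      have hnim := congrArg Complex.im hn
      simp [Complex.mul_im, Complex.mul_re] at hnim
      -- hnim should say: -(L * η) = -(L * η') + n * (2 * π)
      have hreal : η * L / (2 * Real.pi) = η' * L / (2 * Real.pi) - n := by
        field_simp
        nlinarith [hnim]
      have : ι ((η : ℂ) * Complex.I) = ι ((η' : ℂ) * Complex.I) - n := by
        simp only [hι]
        simp only [Complex.mul_im, Complex.I_im, Complex.I_re, Complex.ofReal_re,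
          Complex.ofReal_im, mul_one, mul_zero, zero_mul, add_zero, zero_add]
        rw [hreal, Int.ceil_sub_intCast]
      rw [hee] at this
      have hn0 : n = 0 := by omega
      rw [hn0] at hn
      simp only [Int.cast_zero, zero_mul, add_zero] at hn
      have hL0 : (L : ℂ) ≠ 0 := by exact_mod_cast hL.ne'
      exact neg_injective (mul_left_cancel₀ hL0 hn)
  have hcard : ((Finset.Icc ⌈A⌉ ⌈B⌉).card : ℝ) ≤ 2 + h * L := by
    rw [Int.card_Icc]
    have h1 : (⌈B⌉ + 1 - ⌈A⌉ : ℤ) ≤ (⌈B⌉ + 1 - ⌈A⌉ : ℤ) := le_refl _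
    have hBA : ((⌈B⌉ + 1 - ⌈A⌉ : ℤ) : ℝ) ≤ B + 2 - A := by
      push_cast
      have := Int.ceil_lt_add_one B
      have := Int.le_ceil A
      linarith
    have hto : ((⌈B⌉ + 1 - ⌈A⌉ : ℤ).toNat : ℝ) ≤ max (((⌈B⌉ + 1 - ⌈A⌉ : ℤ)) : ℝ) 0 := by
      have h0 : ((⌈B⌉ + 1 - ⌈A⌉ : ℤ).toNat : ℝ) = (((⌈B⌉ + 1 - ⌈A⌉ : ℤ).toNat : ℤ) : ℝ) := by
        push_cast; ring
      rw [h0, Int.toNat_eq_max, Int.cast_max]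
      norm_num
    have hBA2 : B + 2 - A ≤ 2 + h * L := by
      rw [hA, hB]
      have h2 : (t + h) * L / (2 * Real.pi) - t * L / (2 * Real.pi) = h * L / (2 * Real.pi) := by
        ring
      have h3 : h * L / (2 * Real.pi) ≤ h * L := by
        rw [div_le_iff₀ hpi]
        nlinarith [Real.pi_gt_three, mul_pos hh hL]
      linarith
    calc ((⌈B⌉ + 1 - ⌈A⌉ : ℤ).toNat : ℝ) ≤ max (((⌈B⌉ + 1 - ⌈A⌉ : ℤ)) : ℝ) 0 := hto
      _ ≤ max (B + 2 - A) 0 := by apply max_le_max hBA (le_refl 0)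
      _ ≤ 2 + h * L := by
          apply max_le hBA2
          nlinarith [mul_pos hh hL, hBA2, le_max_left (B + 2 - A) (0:ℝ)]
  calc ((Z.filter fun ρ => (1 : ℂ) - c * (p : ℂ) ^ (-ρ) = 0).card : ℝ)
      ≤ ((Finset.Icc ⌈A⌉ ⌈B⌉).card : ℝ) := by exact_mod_cast key
    _ ≤ 2 + h * L := hcard

/-- Zero-counting bound for `F(s) = ∏_{p ∣ q}(1 - χ*(p) p^{-s})`: there is an absolute
constant `C` such that the number (with multiplicity) of zeros `iη` of `F` with
`t ≤ η ≤ t + h` is at most `C · h · (ω(q)/h + log q + h·r/(h² + t²))`, where `ω(q)` is the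
number of distinct prime factors of `q` and `r` is the number of primes `p ∣ q` with
`χ*(p) = 1`. -/
theorem finite_euler_product_zero_counting :
    ∃ C : ℝ, 0 < C ∧
      ∀ (q d : ℕ) (χ : DirichletCharacter ℂ d), 2 ≤ q → d ∣ q → d ≠ q →
        (∃ p : ℕ, p.Prime ∧ p ∣ q ∧ ¬ p ∣ d) →
        ∀ (t h : ℝ), 0 < h →
        ∀ (Z : Finset ℂ) (m : ℂ → ℕ),
          (∀ ρ : ℂ, ρ ∈ Z ↔
            (∏ p ∈ q.primeFactors, (1 - χ (p : ZMod d) * (p : ℂ) ^ (-ρ))) = 0 ∧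
              ∃ η : ℝ, ρ = η * Complex.I ∧ t ≤ η ∧ η ≤ t + h) →
          (∀ ρ ∈ Z, ∃ g : ℂ → ℂ, AnalyticAt ℂ g ρ ∧ g ρ ≠ 0 ∧ ∀ z : ℂ,
            (∏ p ∈ q.primeFactors, (1 - χ (p : ZMod d) * (p : ℂ) ^ (-z))) =
              (z - ρ) ^ (m ρ) * g z) →
          (∑ ρ ∈ Z, (m ρ : ℝ)) ≤
            C * h * ((q.primeFactors.card : ℝ) / h + Real.log q +
              h * ((q.primeFactors.filter (fun p : ℕ => χ (p : ZMod d) = 1)).card : ℝ) /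
                (h ^ 2 + t ^ 2)) := by
  refine ⟨2, two_pos, ?_⟩
  intro q d χ hq hdq hne hex t h hh Z m hZ hm
  have hq0 : 0 < q := by omega
  set f : ℕ → ℂ → ℂ := fun p z => 1 - χ (p : ZMod d) * (p : ℂ) ^ (-z) with hf
  -- basic facts about primes of q
  have hp2 : ∀ p ∈ q.primeFactors, 2 ≤ p := fun p hp =>
    (Nat.prime_of_mem_primeFactors hp).two_le
  have hpc : ∀ p ∈ q.primeFactors, (p : ℂ) ≠ 0 := fun p hp =>
    Nat.cast_ne_zero.mpr (by have := hp2 p hp; omega)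
  have hLpos : ∀ p ∈ q.primeFactors, 0 < Real.log p := fun p hp =>
    Real.log_pos (by exact_mod_cast (hp2 p hp).trans_lt' one_lt_two)
  have hrw : ∀ p ∈ q.primeFactors, f p = fun z =>
      1 - χ (p : ZMod d) * Complex.exp ((Real.log p : ℂ) * (-z)) := by
    intro p hp
    funext z
    rw [hf]
    simp only
    rw [Complex.cpow_def_of_ne_zero (hpc p hp), Complex.natCast_log]
  have hdiffble : ∀ p ∈ q.primeFactors, Differentiable ℂ (f p) := by
    intro p hp
    rw [hrw p hp]
    exact (differentiable_const 1).sub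
      (((differentiable_id.neg.const_mul _).cexp).const_mul _)
  have hderiv : ∀ p ∈ q.primeFactors, ∀ ρ : ℂ, f p ρ = 0 →
      deriv (f p) ρ = (Real.log p : ℂ) := by
    intro p hp ρ hzero
    have hone : χ (p : ZMod d) * Complex.exp ((Real.log p : ℂ) * (-ρ)) = 1 := by
      have h1 : χ (p : ZMod d) * (p : ℂ) ^ (-ρ) = 1 := by
        rw [hf] at hzero; simp only at hzero; linear_combination -hzero
      rw [← h1, Complex.cpow_def_of_ne_zero (hpc p hp), Complex.natCast_log]
    have h1 : HasDerivAt (fun z : ℂ => (Real.log p : ℂ) * (-z))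
        (-(Real.log p : ℂ)) ρ := by
      simpa using ((hasDerivAt_id ρ).neg.const_mul ((Real.log p : ℂ)))
    have h2 := h1.cexp
    have h3 := (h2.const_mul (χ (p : ZMod d))).const_sub 1
    rw [hrw p hp]
    rw [h3.deriv]
    have : χ (p : ZMod d) * Complex.exp ((Real.log p : ℂ) * (-ρ)) *
        (Real.log p : ℂ) = (Real.log p : ℂ) := by rw [hone, one_mul]
    linear_combination this
  have hLne : ∀ p ∈ q.primeFactors, (Real.log p : ℂ) ≠ 0 := by
    intro p hp
    exact_mod_cast (hLpos p hp).ne'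
  -- multiplicity bound
  have hmult : ∀ ρ ∈ Z,
      m ρ ≤ (q.primeFactors.filter fun p => f p ρ = 0).card := by
    intro ρ hρ
    obtain ⟨g, hg, hgρ, hgeq⟩ := hm ρ hρ
    set P := q.primeFactors.filter (fun p => f p ρ = 0) with hP
    set G : ℂ → ℂ := fun z => (∏ p ∈ P, dslope (f p) ρ z) *
      ∏ p ∈ q.primeFactors.filter (fun p => ¬ f p ρ = 0), f p z with hG
    have hPsub : ∀ p ∈ P, p ∈ q.primeFactors := fun p hp =>
      (Finset.mem_filter.mp hp).1
    have hGcont : ContinuousAt G ρ := by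
      apply ContinuousAt.mul
      · exact tendsto_finset_prod _ fun p hp =>
          (continuousAt_dslope_same.mpr ((hdiffble p (hPsub p hp)).differentiableAt))
      · exact tendsto_finset_prod _ fun p hp =>
          ((hdiffble p (Finset.mem_filter.mp hp).1).continuous.continuousAt)
    have hGρ : G ρ ≠ 0 := by
      apply mul_ne_zero
      · rw [Finset.prod_ne_zero_iff]
        intro p hp
        rw [dslope_same, hderiv p (hPsub p hp) ρ (Finset.mem_filter.mp hp).2]
        exact hLne p (hPsub p hp)
      · rw [Finset.prod_ne_zero_iff]
        exact fun p hp => (Finset.mem_filter.mp hp).2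
    have hfactor : ∀ z : ℂ, (∏ p ∈ q.primeFactors, f p z) = (z - ρ) ^ P.card * G z := by
      intro z
      rw [← Finset.prod_filter_mul_prod_filter_not q.primeFactors (fun p => f p ρ = 0)]
      have hfp : ∀ p ∈ P, f p z = (z - ρ) * dslope (f p) ρ z := by
        intro p hp
        have := sub_smul_dslope (f p) ρ z
        rw [smul_eq_mul] at this
        rw [this, (Finset.mem_filter.mp hp).2, sub_zero]
      rw [Finset.prod_congr rfl hfp, Finset.prod_mul_distrib, Finset.prod_const, hG]
      ring
    have heq : ∀ z : ℂ, (z - ρ) ^ (m ρ) * g z = (z - ρ) ^ P.card * G z := by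
      intro z
      rw [← hfactor z, ← hgeq z]
    exact aux_mult_le hg.continuousAt hGcont hGρ heq
  -- counting per prime
  have hZ' : ∀ ρ ∈ Z, ∃ η : ℝ, ρ = η * Complex.I ∧ t ≤ η ∧ η ≤ t + h :=
    fun ρ hρ => ((hZ ρ).mp hρ).2
  have hcount : ∀ p ∈ q.primeFactors,
      ((Z.filter fun ρ => f p ρ = 0).card : ℝ) ≤ 2 + h * Real.log p := by
    intro p hp
    exact aux_count (χ (p : ZMod d)) p (hp2 p hp) t h hh Z hZ'
  -- sum of logs
  have hlogsum : ∑ p ∈ q.primeFactors, Real.log p ≤ Real.log q := by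
    have h1 : ∑ p ∈ q.primeFactors, Real.log p =
        Real.log (∏ p ∈ q.primeFactors, (p : ℝ)) := by
      rw [Real.log_prod]
      intro p hp
      exact_mod_cast (hpc p hp)
    rw [h1]
    have hpos : 0 < ∏ p ∈ q.primeFactors, (p : ℝ) :=
      Finset.prod_pos fun p hp => by
        have := hp2 p hp; exact_mod_cast (by omega : 0 < p)
    apply Real.log_le_log hpos
    have h3 : (∏ p ∈ q.primeFactors, p) ≤ q :=
      Nat.le_of_dvd hq0 (Nat.prod_primeFactors_dvd q)
    rw [← Nat.cast_prod]; exact_mod_cast h3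
  -- assemble
  have hsum1 : (∑ ρ ∈ Z, (m ρ : ℝ)) ≤
      ∑ ρ ∈ Z, ((q.primeFactors.filter fun p => f p ρ = 0).card : ℝ) := by
    apply Finset.sum_le_sum
    intro ρ hρ
    exact_mod_cast hmult ρ hρ
  have hswap : ∑ ρ ∈ Z, ((q.primeFactors.filter fun p => f p ρ = 0).card : ℝ) =
      ∑ p ∈ q.primeFactors, ((Z.filter fun ρ => f p ρ = 0).card : ℝ) := by
    simp only [Finset.card_filter]
    push_cast
    rw [Finset.sum_comm]
  have hsum2 : ∑ p ∈ q.primeFactors, ((Z.filter fun ρ => f p ρ = 0).card : ℝ) ≤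
      2 * q.primeFactors.card + h * Real.log q := by
    calc ∑ p ∈ q.primeFactors, ((Z.filter fun ρ => f p ρ = 0).card : ℝ)
        ≤ ∑ p ∈ q.primeFactors, (2 + h * Real.log p) := Finset.sum_le_sum hcount
      _ = 2 * q.primeFactors.card + h * ∑ p ∈ q.primeFactors, Real.log p := by
          rw [Finset.sum_add_distrib, Finset.sum_const, ← Finset.mul_sum]
          push_cast; ring
      _ ≤ 2 * q.primeFactors.card + h * Real.log q := by
          have := hlogsum
          nlinarith [hh.le]
  have hfinal : (∑ ρ ∈ Z, (m ρ : ℝ)) ≤ 2 * q.primeFactors.card + h * Real.log q := by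
    calc (∑ ρ ∈ Z, (m ρ : ℝ)) ≤ _ := hsum1
      _ = _ := hswap
      _ ≤ _ := hsum2
  refine hfinal.trans ?_
  have hlogq : 0 ≤ Real.log q := Real.log_nonneg (by exact_mod_cast (by omega : 1 ≤ q))
  have hX : 0 ≤ h * ((q.primeFactors.filter (fun p : ℕ => χ (p : ZMod d) = 1)).card : ℝ) /
      (h ^ 2 + t ^ 2) := by positivity
  have hdivh : 2 * h * ((q.primeFactors.card : ℝ) / h) = 2 * q.primeFactors.card := by
    field_simp
  nlinarith [hh, hlogq, hX, mul_le_mul_of_nonneg_left hX (by linarith : (0:ℝ) ≤ 2 * h)]
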